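/- Let B be a rigid braided category and let ς be an anti-twist on B. For each object X define ς†_X : X → X as the morphism obtained from the component ς_{X*} : X* → X* at the (right) dual of X by taking its dual (mate) morphism and transporting along the canonical isomorphism between X and the double dual ⁎(X*) (left dual of the right dual). Then ς† is again an anti-twist on B. -/

import Mathlib

open CategoryTheory MonoidalCategory

variable {B : Type*} [Category B] [MonoidalCategory B] [BraidedCategory B]

/-- An anti-twist on a braided category `B`: a natural automorphism `ς` of the identity
functor such that `ς_{X⊗Y} = (τ_{Y,X} ∘ τ_{X,Y})⁻¹ ∘ (ς_X ⊗ ς_Y)`. -/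
def IsAntiTwist (ς : ∀ X : B, X ⟶ X) : Prop :=
  (∀ X : B, IsIso (ς X)) ∧
  (∀ {X Y : B} (f : X ⟶ Y), ς X ≫ f = f ≫ ς Y) ∧
  (∀ X Y : B, ς (X ⊗ Y) = (ς X ⊗ₘ ς Y) ≫ (β_ Y X).inv ≫ (β_ X Y).inv)

section Rigid

variable [RigidCategory B]

/-- The canonical isomorphism between `X` and the left dual `ᘁ(Xᘁ)` of its right dual,
coming from the fact that both are left duals of `Xᘁ`. -/
def doubleDualIso (X : B) : X ≅ ᘁ(Xᘁ) :=
  leftDualIso HasRightDual.exact HasLeftDual.exact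

/-- `ς†_X : X ⟶ X`, obtained from the component `ς_{Xᘁ} : Xᘁ ⟶ Xᘁ` at the right dual of
`X` by taking its mate `ᘁ(ς_{Xᘁ}) : ᘁ(Xᘁ) ⟶ ᘁ(Xᘁ)` and transporting along the canonical
isomorphism `X ≅ ᘁ(Xᘁ)`. -/
def daggerAntiTwist (ς : ∀ X : B, X ⟶ X) (X : B) : X ⟶ X :=
  (doubleDualIso X).hom ≫ (ᘁ(ς (Xᘁ))) ≫ (doubleDualIso X).inv

set_option linter.unusedSectionVars false

theorem dagger_eq' (ς : ∀ X : B, X ⟶ X) (X : B) :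
    daggerAntiTwist ς X = (ᘁ(ς (Xᘁ))) := by
  rw [daggerAntiTwist, show doubleDualIso X = Iso.refl X from leftDualIso_id _]
  simp

/-- Morphisms out of `P` are determined by their "name" under a coevaluation. -/
theorem coeval_inj' {P P' Y : B} [ExactPairing P P'] {u v : P ⟶ Y}
    (h : η_ P P' ≫ u ▷ P' = η_ P P' ≫ v ▷ P') : u = v := by
  have key : ∀ w : P ⟶ Y,
      (λ_ P).inv ≫ (η_ P P' ≫ w ▷ P') ▷ P ≫ (α_ _ _ _).hom ≫ Y ◁ ε_ P P' ≫ (ρ_ Y).hom = w := by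
    intro w
    calc (λ_ P).inv ≫ (η_ P P' ≫ w ▷ P') ▷ P ≫ (α_ _ _ _).hom ≫ Y ◁ ε_ P P' ≫ (ρ_ Y).hom
        = 𝟙 P ⊗≫ η_ P P' ▷ P ⊗≫ (w ▷ (P' ⊗ P) ≫ Y ◁ ε_ P P') ⊗≫ 𝟙 Y := by monoidal
      _ = 𝟙 P ⊗≫ (η_ P P' ▷ P ⊗≫ P ◁ ε_ P P') ⊗≫ w := by
          rw [← whisker_exchange]; monoidal
      _ = w := by rw [ExactPairing.evaluation_coevaluation'']; monoidal
  rw [← key u, ← key v, h]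

theorem leftAdjointMate_eq' {A A' : B} [HasLeftDual A] [HasLeftDual A'] (f : A ⟶ A')
    (c : (ᘁA' : B) ⟶ (ᘁA : B))
    (h : η_ (ᘁA') A' ≫ c ▷ A' = η_ (ᘁA) A ≫ (ᘁA : B) ◁ f) : (ᘁf) = c := by
  apply coeval_inj' (P := (ᘁA' : B)) (P' := A')
  rw [coevaluation_comp_leftAdjointMate, h]

theorem mate_mate' {X Y : B} [HasRightDual X] [HasRightDual Y] (f : X ⟶ Y) :
    (ᘁ(fᘁ)) = f :=
  leftAdjointMate_eq' (fᘁ) f (coevaluation_comp_rightAdjointMate f).symm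

/-- The exact pairing between `X ⊗ Y` and `Yᘁ ⊗ Xᘁ`. -/
def tensorExactPairing' (X Y : B) [HasRightDual X] [HasRightDual Y] :
    ExactPairing (X ⊗ Y) ((Yᘁ : B) ⊗ (Xᘁ : B)) where
  coevaluation' :=
    η_ X (Xᘁ) ⊗≫ X ◁ η_ Y (Yᘁ) ▷ (Xᘁ : B) ⊗≫ 𝟙 ((X ⊗ Y) ⊗ ((Yᘁ : B) ⊗ (Xᘁ : B)))
  evaluation' :=
    𝟙 (((Yᘁ : B) ⊗ (Xᘁ : B)) ⊗ (X ⊗ Y)) ⊗≫ (Yᘁ : B) ◁ ε_ X (Xᘁ) ▷ Y ⊗≫ ε_ Y (Yᘁ)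
  coevaluation_evaluation' := by
    calc _
        = 𝟙 _ ⊗≫ (((Yᘁ : B) ⊗ (Xᘁ : B) : B)) ◁ η_ X (Xᘁ) ⊗≫
            (((Yᘁ : B) ⊗ ((Xᘁ : B) ⊗ X)) ◁ (η_ Y (Yᘁ) ▷ (Xᘁ : B)) ≫
              ((Yᘁ : B) ◁ ε_ X (Xᘁ)) ▷ ((Y ⊗ (Yᘁ : B)) ⊗ (Xᘁ : B))) ⊗≫
            (ε_ Y (Yᘁ)) ▷ ((Yᘁ : B) ⊗ (Xᘁ : B)) ⊗≫ 𝟙 _ := by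
          monoidal
      _ = 𝟙 _ ⊗≫ (Yᘁ : B) ◁ ((Xᘁ : B) ◁ η_ X (Xᘁ) ⊗≫ ε_ X (Xᘁ) ▷ (Xᘁ : B)) ▷ (𝟙_ B) ⊗≫
            (((Yᘁ : B) ◁ η_ Y (Yᘁ) ⊗≫ ε_ Y (Yᘁ) ▷ (Yᘁ : B)) ▷ (Xᘁ : B)) ⊗≫ 𝟙 _ := by
          rw [whisker_exchange]; monoidal
      _ = _ := by
          rw [ExactPairing.coevaluation_evaluation'', ExactPairing.coevaluation_evaluation'']
          monoidal
  evaluation_coevaluation' := by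
    calc _
        = 𝟙 _ ⊗≫ η_ X (Xᘁ) ▷ (X ⊗ Y) ⊗≫
            ((X ◁ η_ Y (Yᘁ)) ▷ (((Xᘁ : B) ⊗ X) ⊗ Y) ≫
              (X ⊗ (Y ⊗ (Yᘁ : B))) ◁ (ε_ X (Xᘁ) ▷ Y)) ⊗≫
            X ◁ (Y ◁ ε_ Y (Yᘁ)) ⊗≫ 𝟙 _ := by
          monoidal
      _ = 𝟙 _ ⊗≫ ((η_ X (Xᘁ) ▷ X ⊗≫ X ◁ ε_ X (Xᘁ)) ▷ Y) ⊗≫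
            (X ◁ (η_ Y (Yᘁ) ▷ Y ⊗≫ Y ◁ ε_ Y (Yᘁ))) ⊗≫ 𝟙 _ := by
          rw [← whisker_exchange]; monoidal
      _ = _ := by
          rw [ExactPairing.evaluation_coevaluation'', ExactPairing.evaluation_coevaluation'']
          monoidal

/-- Key η-identity: the mate of a tensor of endomorphisms of the duals. -/
theorem coev_tensor_mates' (X Y : B) [HasRightDual X] [HasRightDual Y]
    (f : (Yᘁ : B) ⟶ (Yᘁ : B)) (g : (Xᘁ : B) ⟶ (Xᘁ : B)) (F : Y ⟶ Y) (G : X ⟶ X)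
    (hF : η_ Y (Yᘁ) ≫ F ▷ (Yᘁ : B) = η_ Y (Yᘁ) ≫ Y ◁ f)
    (hG : η_ X (Xᘁ) ≫ G ▷ (Xᘁ : B) = η_ X (Xᘁ) ≫ X ◁ g) :
    (η_ X (Xᘁ) ⊗≫ X ◁ (η_ Y (Yᘁ) ▷ (Xᘁ : B)) ⊗≫ (G ⊗ₘ F) ▷ ((Yᘁ : B) ⊗ (Xᘁ : B))
        : 𝟙_ B ⟶ (X ⊗ Y) ⊗ ((Yᘁ : B) ⊗ (Xᘁ : B))) =
      η_ X (Xᘁ) ⊗≫ X ◁ (η_ Y (Yᘁ) ▷ (Xᘁ : B)) ⊗≫ (X ⊗ Y) ◁ (f ⊗ₘ g) := by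
  calc _
      = 𝟙 _ ⊗≫ η_ X (Xᘁ) ⊗≫ X ◁ (η_ Y (Yᘁ) ▷ (Xᘁ : B)) ⊗≫
          (G ▷ Y ≫ X ◁ F) ▷ ((Yᘁ : B) ⊗ (Xᘁ : B)) ⊗≫ 𝟙 _ := by
        rw [MonoidalCategory.tensorHom_def]; monoidal
    _ = 𝟙 _ ⊗≫ η_ X (Xᘁ) ⊗≫
          (G ▷ ((𝟙_ B) ⊗ (Xᘁ : B)) ≫ X ◁ (η_ Y (Yᘁ) ▷ (Xᘁ : B))) ⊗≫
          (X ◁ F) ▷ ((Yᘁ : B) ⊗ (Xᘁ : B)) ⊗≫ 𝟙 _ := by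
        rw [← whisker_exchange G (η_ Y (Yᘁ) ▷ (Xᘁ : B))]; monoidal
    _ = 𝟙 _ ⊗≫ (η_ X (Xᘁ) ≫ G ▷ (Xᘁ : B)) ⊗≫
          X ◁ ((η_ Y (Yᘁ) ≫ F ▷ (Yᘁ : B)) ▷ (Xᘁ : B)) ⊗≫ 𝟙 _ := by
        monoidal
    _ = 𝟙 _ ⊗≫ (η_ X (Xᘁ) ≫ X ◁ g) ⊗≫
          X ◁ ((η_ Y (Yᘁ) ≫ Y ◁ f) ▷ (Xᘁ : B)) ⊗≫ 𝟙 _ := by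
        rw [hF, hG]
    _ = 𝟙 _ ⊗≫ η_ X (Xᘁ) ⊗≫
          X ◁ ((𝟙_ B) ◁ g ≫ (η_ Y (Yᘁ) ≫ Y ◁ f) ▷ (Xᘁ : B)) ⊗≫ 𝟙 _ := by
        monoidal
    _ = 𝟙 _ ⊗≫ η_ X (Xᘁ) ⊗≫
          X ◁ ((η_ Y (Yᘁ) ≫ Y ◁ f) ▷ (Xᘁ : B) ≫ (Y ⊗ (Yᘁ : B)) ◁ g) ⊗≫ 𝟙 _ := by
        rw [whisker_exchange (η_ Y (Yᘁ) ≫ Y ◁ f) g]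
    _ = _ := by
        rw [MonoidalCategory.tensorHom_def]; monoidal

open BraidedCategory in
/-- Key η-identity: sliding a braiding around the nested coevaluations. -/
theorem coev_braiding_slide' (X Y : B) [HasRightDual X] [HasRightDual Y] :
    (η_ X (Xᘁ) ⊗≫ X ◁ (η_ Y (Yᘁ) ▷ (Xᘁ : B)) ⊗≫ (β_ Y X).inv ▷ ((Yᘁ : B) ⊗ (Xᘁ : B))
        : 𝟙_ B ⟶ (Y ⊗ X) ⊗ ((Yᘁ : B) ⊗ (Xᘁ : B))) =
      η_ Y (Yᘁ) ⊗≫ Y ◁ (η_ X (Xᘁ) ▷ (Yᘁ : B)) ⊗≫ (Y ⊗ X) ◁ (β_ (Yᘁ : B) (Xᘁ : B)).inv := by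
  calc _
      = 𝟙 _ ⊗≫ η_ X (Xᘁ) ⊗≫ X ◁ (η_ Y (Yᘁ) ▷ (Xᘁ : B)) ⊗≫
          ((β_ Y X).inv ▷ (Yᘁ : B)) ▷ (Xᘁ : B) ⊗≫
          (Y ◁ ((β_ (Yᘁ : B) X).inv ≫ (β_ (Yᘁ : B) X).hom)) ▷ (Xᘁ : B) ⊗≫ 𝟙 _ := by
        rw [Iso.inv_hom_id]; monoidal
    _ = 𝟙 _ ⊗≫ η_ X (Xᘁ) ⊗≫
          ((X ◁ η_ Y (Yᘁ) ≫ (β_ (Y ⊗ (Yᘁ : B)) X).inv) ▷ (Xᘁ : B)) ⊗≫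
          (Y ◁ (β_ (Yᘁ : B) X).hom) ▷ (Xᘁ : B) ⊗≫ 𝟙 _ := by
        rw [braiding_tensor_left_inv]; monoidal
    _ = 𝟙 _ ⊗≫ η_ X (Xᘁ) ⊗≫
          (((β_ (𝟙_ B) X).inv ≫ η_ Y (Yᘁ) ▷ X) ▷ (Xᘁ : B)) ⊗≫
          (Y ◁ (β_ (Yᘁ : B) X).hom) ▷ (Xᘁ : B) ⊗≫ 𝟙 _ := by
        rw [braiding_inv_naturality_right X (η_ Y (Yᘁ))]
    _ = 𝟙 _ ⊗≫ ((𝟙_ B) ◁ η_ X (Xᘁ) ≫ η_ Y (Yᘁ) ▷ (X ⊗ (Xᘁ : B))) ⊗≫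
          (Y ◁ (β_ (Yᘁ : B) X).hom) ▷ (Xᘁ : B) ⊗≫ 𝟙 _ := by
        rw [braiding_inv_tensorUnit_left]; monoidal
    _ = 𝟙 _ ⊗≫ (η_ Y (Yᘁ) ▷ (𝟙_ B) ≫ (Y ⊗ (Yᘁ : B)) ◁ η_ X (Xᘁ)) ⊗≫
          (Y ◁ (β_ (Yᘁ : B) X).hom) ▷ (Xᘁ : B) ⊗≫ 𝟙 _ := by
        rw [← whisker_exchange (η_ Y (Yᘁ)) (η_ X (Xᘁ))]
    _ = 𝟙 _ ⊗≫ η_ Y (Yᘁ) ⊗≫ Y ◁ ((β_ (Yᘁ : B) (𝟙_ B)).inv ≫ (Yᘁ : B) ◁ η_ X (Xᘁ)) ⊗≫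
          Y ◁ ((β_ (Yᘁ : B) X).hom ▷ (Xᘁ : B)) ⊗≫ 𝟙 _ := by
        rw [braiding_inv_tensorUnit_right]; monoidal
    _ = 𝟙 _ ⊗≫ η_ Y (Yᘁ) ⊗≫
          Y ◁ (η_ X (Xᘁ) ▷ (Yᘁ : B) ≫ (β_ (Yᘁ : B) (X ⊗ (Xᘁ : B))).inv) ⊗≫
          Y ◁ ((β_ (Yᘁ : B) X).hom ▷ (Xᘁ : B)) ⊗≫ 𝟙 _ := by
        rw [braiding_inv_naturality_left (η_ X (Xᘁ)) (Yᘁ : B)]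
    _ = 𝟙 _ ⊗≫ η_ Y (Yᘁ) ⊗≫ Y ◁ (η_ X (Xᘁ) ▷ (Yᘁ : B)) ⊗≫
          Y ◁ (X ◁ (β_ (Yᘁ : B) (Xᘁ : B)).inv) ⊗≫
          Y ◁ (((β_ (Yᘁ : B) X).inv ≫ (β_ (Yᘁ : B) X).hom) ▷ (Xᘁ : B)) ⊗≫ 𝟙 _ := by
        rw [braiding_tensor_right_inv]; monoidal
    _ = _ := by
        rw [Iso.inv_hom_id]; monoidal

set_option maxHeartbeats 1600000

/-- If `ς` is an anti-twist on a rigid braided category `B`, then `ς†` is again an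
anti-twist on `B`. -/
theorem isAntiTwist_dagger (ς : ∀ X : B, X ⟶ X) (hς : IsAntiTwist ς) :
    IsAntiTwist (daggerAntiTwist ς) := by
  obtain ⟨hiso, hnat, hten⟩ := hς
  refine ⟨fun X => ?_, fun {X Y} f => ?_, fun X Y => ?_⟩
  · rw [dagger_eq']
    haveI := hiso (Xᘁ : B)
    refine ⟨⟨ᘁ(CategoryTheory.inv (ς (Xᘁ : B))), ?_, ?_⟩⟩
    · rw [← comp_leftAdjointMate, IsIso.inv_hom_id, leftAdjointMate_id]; rfl
    · rw [← comp_leftAdjointMate, IsIso.hom_inv_id, leftAdjointMate_id]; rfl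
  · rw [dagger_eq', dagger_eq']
    have h2 : (ᘁ(fᘁ)) ≫ (ᘁ(ς (Yᘁ : B))) = (ᘁ(ς (Xᘁ : B))) ≫ (ᘁ(fᘁ)) := by
      rw [← comp_leftAdjointMate, ← comp_leftAdjointMate, hnat (fᘁ)]
    rw [mate_mate'] at h2
    exact h2.symm
  · simp only [dagger_eq']
    letI t : ExactPairing (X ⊗ Y) ((Yᘁ : B) ⊗ (Xᘁ : B)) := tensorExactPairing' X Y
    letI t' : ExactPairing (Y ⊗ X) ((Xᘁ : B) ⊗ (Yᘁ : B)) := tensorExactPairing' Y X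
    letI lL : HasLeftDual ((Yᘁ : B) ⊗ (Xᘁ : B)) := @HasLeftDual.mk B _ _ _ (X ⊗ Y) t
    letI lL' : HasLeftDual ((Xᘁ : B) ⊗ (Yᘁ : B)) := @HasLeftDual.mk B _ _ _ (Y ⊗ X) t'
    let j : (((X ⊗ Y)ᘁ : B)) ≅ ((Yᘁ : B) ⊗ (Xᘁ : B)) :=
      rightDualIso (@HasRightDual.exact B _ _ (X ⊗ Y) _) t
    have hZ : ς ((X ⊗ Y)ᘁ) = j.hom ≫ (ς ((Yᘁ : B) ⊗ (Xᘁ : B)) ≫ j.inv) := by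
      rw [← Category.assoc, ← hnat j.hom, Category.assoc, Iso.hom_inv_id, Category.comp_id]
    have hjh : (@leftAdjointMate B _ _ _ _ inferInstance lL j.hom : (X ⊗ Y) ⟶ (X ⊗ Y)) =
        𝟙 (X ⊗ Y) :=
      @mate_mate' B _ _ _ _ (X ⊗ Y) (X ⊗ Y)
        (@HasRightDual.mk B _ _ (X ⊗ Y) ((Yᘁ : B) ⊗ (Xᘁ : B)) t) inferInstance (𝟙 (X ⊗ Y))
    have hji : (@leftAdjointMate B _ _ _ _ lL inferInstance j.inv : (X ⊗ Y) ⟶ (X ⊗ Y)) =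
        𝟙 (X ⊗ Y) :=
      @mate_mate' B _ _ _ _ (X ⊗ Y) (X ⊗ Y) inferInstance
        (@HasRightDual.mk B _ _ (X ⊗ Y) ((Yᘁ : B) ⊗ (Xᘁ : B)) t) (𝟙 (X ⊗ Y))
    have hc : @leftAdjointMate B _ _ _ _ lL' lL ((β_ (Yᘁ : B) (Xᘁ : B)).inv) = (β_ Y X).inv := by
      apply @leftAdjointMate_eq' B _ _ _ _ _ _ lL' lL _ ((β_ Y X).inv)
      calc (η_ X (Xᘁ) ⊗≫ X ◁ η_ Y (Yᘁ) ▷ (Xᘁ : B) ⊗≫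
              𝟙 ((X ⊗ Y) ⊗ ((Yᘁ : B) ⊗ (Xᘁ : B)))) ≫ (β_ Y X).inv ▷ ((Yᘁ : B) ⊗ (Xᘁ : B))
          = (η_ X (Xᘁ) ⊗≫ X ◁ (η_ Y (Yᘁ) ▷ (Xᘁ : B)) ⊗≫ (β_ Y X).inv ▷ ((Yᘁ : B) ⊗ (Xᘁ : B))
              : 𝟙_ B ⟶ (Y ⊗ X) ⊗ ((Yᘁ : B) ⊗ (Xᘁ : B))) := by monoidal
        _ = η_ Y (Yᘁ) ⊗≫ Y ◁ (η_ X (Xᘁ) ▷ (Yᘁ : B)) ⊗≫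
              (Y ⊗ X) ◁ (β_ (Yᘁ : B) (Xᘁ : B)).inv := coev_braiding_slide' X Y
        _ = (η_ Y (Yᘁ) ⊗≫ Y ◁ η_ X (Xᘁ) ▷ (Yᘁ : B) ⊗≫
              𝟙 ((Y ⊗ X) ⊗ ((Xᘁ : B) ⊗ (Yᘁ : B)))) ≫
              (Y ⊗ X) ◁ (β_ (Yᘁ : B) (Xᘁ : B)).inv := by monoidal
    have hb : @leftAdjointMate B _ _ _ _ lL lL' ((β_ (Xᘁ : B) (Yᘁ : B)).inv) = (β_ X Y).inv := by
      apply @leftAdjointMate_eq' B _ _ _ _ _ _ lL lL' _ ((β_ X Y).inv)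
      calc (η_ Y (Yᘁ) ⊗≫ Y ◁ η_ X (Xᘁ) ▷ (Yᘁ : B) ⊗≫
              𝟙 ((Y ⊗ X) ⊗ ((Xᘁ : B) ⊗ (Yᘁ : B)))) ≫ (β_ X Y).inv ▷ ((Xᘁ : B) ⊗ (Yᘁ : B))
          = (η_ Y (Yᘁ) ⊗≫ Y ◁ (η_ X (Xᘁ) ▷ (Yᘁ : B)) ⊗≫ (β_ X Y).inv ▷ ((Xᘁ : B) ⊗ (Yᘁ : B))
              : 𝟙_ B ⟶ (X ⊗ Y) ⊗ ((Xᘁ : B) ⊗ (Yᘁ : B))) := by monoidal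
        _ = η_ X (Xᘁ) ⊗≫ X ◁ (η_ Y (Yᘁ) ▷ (Xᘁ : B)) ⊗≫
              (X ⊗ Y) ◁ (β_ (Xᘁ : B) (Yᘁ : B)).inv := coev_braiding_slide' Y X
        _ = (η_ X (Xᘁ) ⊗≫ X ◁ η_ Y (Yᘁ) ▷ (Xᘁ : B) ⊗≫
              𝟙 ((X ⊗ Y) ⊗ ((Yᘁ : B) ⊗ (Xᘁ : B)))) ≫
              (X ⊗ Y) ◁ (β_ (Xᘁ : B) (Yᘁ : B)).inv := by monoidal
    have ha : @leftAdjointMate B _ _ _ _ lL lL (ς (Yᘁ : B) ⊗ₘ ς (Xᘁ : B)) =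
        ((ᘁ(ς (Xᘁ))) ⊗ₘ (ᘁ(ς (Yᘁ)))) := by
      apply @leftAdjointMate_eq' B _ _ _ _ _ _ lL lL _ ((ᘁ(ς (Xᘁ))) ⊗ₘ (ᘁ(ς (Yᘁ))))
      calc (η_ X (Xᘁ) ⊗≫ X ◁ η_ Y (Yᘁ) ▷ (Xᘁ : B) ⊗≫
              𝟙 ((X ⊗ Y) ⊗ ((Yᘁ : B) ⊗ (Xᘁ : B)))) ≫
              ((ᘁ(ς (Xᘁ))) ⊗ₘ (ᘁ(ς (Yᘁ)))) ▷ ((Yᘁ : B) ⊗ (Xᘁ : B))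
          = (η_ X (Xᘁ) ⊗≫ X ◁ (η_ Y (Yᘁ) ▷ (Xᘁ : B)) ⊗≫
              ((ᘁ(ς (Xᘁ))) ⊗ₘ (ᘁ(ς (Yᘁ)))) ▷ ((Yᘁ : B) ⊗ (Xᘁ : B))
              : 𝟙_ B ⟶ (X ⊗ Y) ⊗ ((Yᘁ : B) ⊗ (Xᘁ : B))) := by monoidal
        _ = η_ X (Xᘁ) ⊗≫ X ◁ (η_ Y (Yᘁ) ▷ (Xᘁ : B)) ⊗≫ (X ⊗ Y) ◁ (ς (Yᘁ : B) ⊗ₘ ς (Xᘁ : B)) :=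
            coev_tensor_mates' X Y (ς (Yᘁ : B)) (ς (Xᘁ : B)) (ᘁ(ς (Yᘁ))) (ᘁ(ς (Xᘁ)))
              (coevaluation_comp_leftAdjointMate (ς (Yᘁ : B)))
              (coevaluation_comp_leftAdjointMate (ς (Xᘁ : B)))
        _ = (η_ X (Xᘁ) ⊗≫ X ◁ η_ Y (Yᘁ) ▷ (Xᘁ : B) ⊗≫
              𝟙 ((X ⊗ Y) ⊗ ((Yᘁ : B) ⊗ (Xᘁ : B)))) ≫
              (X ⊗ Y) ◁ (ς (Yᘁ : B) ⊗ₘ ς (Xᘁ : B)) := by monoidal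
    have hswap : ∀ (u : X ⟶ X) (v : Y ⟶ Y),
        (β_ Y X).inv ≫ (β_ X Y).inv ≫ (u ⊗ₘ v) = (u ⊗ₘ v) ≫ (β_ Y X).inv ≫ (β_ X Y).inv := by
      intro u v; simp
    calc (ᘁ(ς (((X ⊗ Y))ᘁ)) : (X ⊗ Y) ⟶ (X ⊗ Y))
        = @leftAdjointMate B _ _ _ _ lL inferInstance (ς ((Yᘁ : B) ⊗ (Xᘁ : B)) ≫ j.inv) ≫
            @leftAdjointMate B _ _ _ _ inferInstance lL j.hom := by
          rw [hZ]
          exact @comp_leftAdjointMate B _ _ _ _ _ inferInstance lL inferInstance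
            j.hom (ς ((Yᘁ : B) ⊗ (Xᘁ : B)) ≫ j.inv)
      _ = (@leftAdjointMate B _ _ _ _ lL inferInstance j.inv ≫
            @leftAdjointMate B _ _ _ _ lL lL (ς ((Yᘁ : B) ⊗ (Xᘁ : B)))) ≫
            @leftAdjointMate B _ _ _ _ inferInstance lL j.hom := by
          rw [@comp_leftAdjointMate B _ _ _ _ _ lL lL inferInstance
            (ς ((Yᘁ : B) ⊗ (Xᘁ : B))) j.inv]
      _ = @leftAdjointMate B _ _ _ _ lL lL (ς ((Yᘁ : B) ⊗ (Xᘁ : B))) := by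
          rw [hji, hjh]
          have aux : ∀ (m : (X ⊗ Y) ⟶ (X ⊗ Y)), (𝟙 (X ⊗ Y) ≫ m) ≫ 𝟙 (X ⊗ Y) = m := by
            intro m; simp
          exact aux _
      _ = @leftAdjointMate B _ _ _ _ lL' lL ((β_ (Yᘁ : B) (Xᘁ : B)).inv) ≫
          @leftAdjointMate B _ _ _ _ lL lL' ((β_ (Xᘁ : B) (Yᘁ : B)).inv) ≫
          @leftAdjointMate B _ _ _ _ lL lL (ς (Yᘁ : B) ⊗ₘ ς (Xᘁ : B)) := by
          rw [hten (Yᘁ : B) (Xᘁ : B)]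
          rw [@comp_leftAdjointMate B _ _ _ _ _ lL lL lL (ς (Yᘁ : B) ⊗ₘ ς (Xᘁ : B))
            ((β_ (Xᘁ : B) (Yᘁ : B)).inv ≫ (β_ (Yᘁ : B) (Xᘁ : B)).inv)]
          rw [@comp_leftAdjointMate B _ _ _ _ _ lL lL' lL
            ((β_ (Xᘁ : B) (Yᘁ : B)).inv) ((β_ (Yᘁ : B) (Xᘁ : B)).inv)]
          simp [Category.assoc]
      _ = (β_ Y X).inv ≫ (β_ X Y).inv ≫ ((ᘁ(ς (Xᘁ))) ⊗ₘ (ᘁ(ς (Yᘁ)))) := by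
          rw [hc, hb, ha]
      _ = ((ᘁ(ς (Xᘁ))) ⊗ₘ (ᘁ(ς (Yᘁ)))) ≫ (β_ Y X).inv ≫ (β_ X Y).inv := hswap _ _

end Rigid
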